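/- Fix integers k, L ≥ 1, and consider networks f_{L+1}(x) = uᵀ f_L(x) defined recursively by f_0(x)=x and f_{j+1}(x) = (W^{j+1} f_j(x))^{∘k}, where each weight matrix W^j satisfies ‖W^j‖ ≤ B (spectral norm) and ‖u‖ ≤ b. Then the Rademacher complexity of this class on any m points of Euclidean norm at most b_x is at most b · B^{k+k²+⋯+k^L} · b_x^{k^L} / √m. -/

import Mathlib

/-- Euclidean norm of a vector in `ℝ^d`. -/
noncomputable def euclNorm {d : ℕ} (x : Fin d → ℝ) : ℝ := Real.sqrt (∑ i, x i ^ 2)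

/-- Spectral norm of a matrix: `sup_{‖x‖=1} ‖Mx‖`. -/
noncomputable def specNorm {n d : ℕ} (M : Matrix (Fin n) (Fin d) ℝ) : ℝ :=
  sSup {r : ℝ | ∃ x : Fin d → ℝ, euclNorm x = 1 ∧ r = euclNorm (M.mulVec x)}

/-- Expectation over i.i.d. uniform `{-1,+1}` signs `ε : Fin m → ℝ`. -/
noncomputable def rademacherExp (m : ℕ) (f : (Fin m → ℝ) → ℝ) : ℝ :=
  (∑ ε : Fin m → Bool, f (fun i => if ε i then 1 else -1)) / 2 ^ m

/-- The forward pass `f_0(x) = x`, `f_{j+1}(x) = (W^{j+1} f_j(x))^{∘k}`. -/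
noncomputable def fwd (k : ℕ) (dims : ℕ → ℕ)
    (W : ∀ j : ℕ, Matrix (Fin (dims (j + 1))) (Fin (dims j)) ℝ) :
    (j : ℕ) → (Fin (dims 0) → ℝ) → Fin (dims j) → ℝ
  | 0, x => x
  | j + 1, x => fun ℓ => ((W j).mulVec (fwd k dims W j x)) ℓ ^ k

open Finset

lemma sum_pi_succ {Y M : Type*} [Fintype Y] [AddCommMonoid M] {k : ℕ}
    (f : (Fin (k+1) → Y) → M) :
    ∑ h : Fin (k+1) → Y, f h = ∑ y : Y, ∑ h' : Fin k → Y, f (Fin.cons y h') := by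
  calc ∑ h : Fin (k+1) → Y, f h
      = ∑ p : Y × (Fin k → Y), (fun p : Y × (Fin k → Y) => f (Fin.cons p.1 p.2)) p :=
        Fintype.sum_equiv (Fin.consEquiv fun _ => Y).symm _ _
          (fun h => by simp [Fin.consEquiv, Fin.cons_self_tail])
    _ = ∑ y : Y, ∑ h' : Fin k → Y, f (Fin.cons y h') :=
        Fintype.sum_prod_type (f := fun p : Y × (Fin k → Y) => f (Fin.cons p.1 p.2))

lemma sum_prod_pi {ι M : Type*} [Fintype ι] [CommSemiring M] :
    ∀ (k : ℕ) (f : Fin k → ι → M),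
    ∑ σ : Fin k → ι, ∏ t, f t (σ t) = ∏ t, ∑ s : ι, f t s := by
  intro k
  induction k with
  | zero => intro f; simp
  | succ k ih =>
    intro f
    rw [sum_pi_succ (fun σ => ∏ t, f t (σ t))]
    simp only [Fin.prod_univ_succ, Fin.cons_zero, Fin.cons_succ]
    simp only [← Finset.mul_sum, ih (fun t s => f t.succ s), ← Finset.sum_mul]

lemma tensor_pow_bound {X Y : Type*} [Fintype X] [Fintype Y] (A : X → Y → ℝ) (c2 : ℝ)
    (hc2 : 0 ≤ c2)
    (hA : ∀ w : Y → ℝ, ∑ x, (∑ y, A x y * w y) ^ 2 ≤ c2 * ∑ y, (w y) ^ 2) :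
    ∀ (k : ℕ) (z : (Fin k → Y) → ℝ),
      ∑ σ : Fin k → X, (∑ h : Fin k → Y, (∏ t, A (σ t) (h t)) * z h) ^ 2
        ≤ c2 ^ k * ∑ h : Fin k → Y, (z h) ^ 2 := by
  intro k
  induction k with
  | zero =>
    intro z
    haveI : Unique (Fin 0 → Y) := ⟨⟨fun t => t.elim0⟩, fun f => funext fun t => t.elim0⟩
    haveI : Unique (Fin 0 → X) := ⟨⟨fun t => t.elim0⟩, fun f => funext fun t => t.elim0⟩
    simp [Fintype.sum_unique]
  | succ k ih =>
    intro z
    set z2 : Y → (Fin k → X) → ℝ :=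
      fun y σ' => ∑ h' : Fin k → Y, (∏ t, A (σ' t) (h' t)) * z (Fin.cons y h') with hz2
    have inner_eq : ∀ (x0 : X) (σ' : Fin k → X),
        ∑ h : Fin (k+1) → Y, (∏ t, A ((Fin.cons x0 σ' : Fin (k+1) → X) t) (h t)) * z h
          = ∑ y : Y, A x0 y * z2 y σ' := by
      intro x0 σ'
      rw [sum_pi_succ (fun h => (∏ t, A ((Fin.cons x0 σ' : Fin (k+1) → X) t) (h t)) * z h)]
      refine Finset.sum_congr rfl fun y _ => ?_
      rw [hz2, Finset.mul_sum]
      refine Finset.sum_congr rfl fun h' _ => ?_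
      simp only [Fin.prod_univ_succ, Fin.cons_zero, Fin.cons_succ]
      ring
    calc ∑ σ : Fin (k+1) → X, (∑ h : Fin (k+1) → Y, (∏ t, A (σ t) (h t)) * z h) ^ 2
        = ∑ x0 : X, ∑ σ' : Fin k → X, (∑ y : Y, A x0 y * z2 y σ') ^ 2 := by
          rw [sum_pi_succ (fun σ => (∑ h : Fin (k+1) → Y, (∏ t, A (σ t) (h t)) * z h) ^ 2)]
          exact Finset.sum_congr rfl fun x0 _ => Finset.sum_congr rfl fun σ' _ => by
            rw [inner_eq]
      _ = ∑ σ' : Fin k → X, ∑ x0 : X, (∑ y : Y, A x0 y * z2 y σ') ^ 2 := Finset.sum_comm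
      _ ≤ ∑ σ' : Fin k → X, c2 * ∑ y : Y, (z2 y σ') ^ 2 :=
          Finset.sum_le_sum fun σ' _ => hA (fun y => z2 y σ')
      _ = c2 * ∑ y : Y, ∑ σ' : Fin k → X, (z2 y σ') ^ 2 := by
          rw [← Finset.mul_sum, Finset.sum_comm]
      _ ≤ c2 * ∑ y : Y, c2 ^ k * ∑ h' : Fin k → Y, (z (Fin.cons y h')) ^ 2 := by
          refine mul_le_mul_of_nonneg_left (Finset.sum_le_sum fun y _ => ?_) hc2
          exact ih (fun h' => z (Fin.cons y h'))
      _ = c2 ^ (k+1) * ∑ h : Fin (k+1) → Y, (z h) ^ 2 := by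
          rw [sum_pi_succ (fun h => (z h) ^ 2), ← Finset.mul_sum]
          ring

lemma diag_sum {k n : ℕ} (hk : 0 < k) (G : Fin n → (Fin k → Fin n) → ℝ) :
    ∑ h : Fin k → Fin n, (if ∀ t, h t = h ⟨0, hk⟩ then G (h ⟨0, hk⟩) h else 0)
      = ∑ ℓ, G ℓ (fun _ => ℓ) := by
  have key : ∀ h : Fin k → Fin n,
      (if ∀ t, h t = h ⟨0, hk⟩ then G (h ⟨0, hk⟩) h else 0)
        = ∑ ℓ, (if h = (fun _ => ℓ) then G ℓ (fun _ => ℓ) else 0) := by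
    intro h
    by_cases hcon : ∀ t, h t = h ⟨0, hk⟩
    · have hh : h = fun _ => h ⟨0, hk⟩ := funext hcon
      rw [if_pos hcon]
      rw [Finset.sum_eq_single (h ⟨0, hk⟩)]
      · rw [if_pos hh, ← hh]
      · intro ℓ _ hne
        rw [if_neg]
        intro he
        exact hne (congrFun he ⟨0, hk⟩).symm
      · intro habs; exact absurd (mem_univ _) habs
    · rw [if_neg hcon]
      symm
      refine Finset.sum_eq_zero fun ℓ _ => ?_
      rw [if_neg]
      intro he
      exact hcon fun t => by rw [he]
  rw [Finset.sum_congr rfl fun h _ => key h, Finset.sum_comm]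
  refine Finset.sum_congr rfl fun ℓ _ => ?_
  rw [Finset.sum_ite_eq' univ (fun _ => ℓ) (fun _ => G ℓ (fun _ => ℓ))]
  simp

lemma sgn_orth {m : ℕ} (i i' : Fin m) :
    ∑ ε : Fin m → Bool, ((if ε i then (1:ℝ) else -1) * (if ε i' then (1:ℝ) else -1))
      = if i = i' then (2:ℝ) ^ m else 0 := by
  by_cases hii : i = i'
  · subst hii
    rw [if_pos rfl]
    have : ∀ ε : Fin m → Bool, ((if ε i then (1:ℝ) else -1) * (if ε i then (1:ℝ) else -1)) = 1 := by
      intro ε; by_cases h : ε i <;> simp [h]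
    rw [Finset.sum_congr rfl fun ε _ => this ε, Finset.sum_const]
    simp [Fintype.card_fun]
  · rw [if_neg hii]
    set F : (Fin m → Bool) → ℝ :=
      fun ε => (if ε i then (1:ℝ) else -1) * (if ε i' then (1:ℝ) else -1) with hF
    have hinv : Function.Involutive (fun ε : Fin m → Bool => Function.update ε i' (!(ε i'))) := by
      intro ε
      funext t
      by_cases ht : t = i'
      · subst ht; simp [Function.update_self]
      · simp [Function.update_of_ne ht]
    have hflip : ∀ ε, F (Function.update ε i' (!(ε i'))) = -F ε := by
      intro ε
      rw [hF]
      simp only [Function.update_of_ne hii, Function.update_self]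
      by_cases h1 : ε i <;> by_cases h2 : ε i' <;> simp [h1, h2]
    have hsum : ∑ ε : Fin m → Bool, F ε = ∑ ε : Fin m → Bool, F (Function.update ε i' (!(ε i'))) :=
      (Fintype.sum_equiv hinv.toPerm _ _ (fun ε => rfl)).symm
    rw [Finset.sum_congr rfl (fun ε _ => hflip ε), Finset.sum_neg_distrib] at hsum
    linarith [hsum]

lemma specA {n d : ℕ} (W : Matrix (Fin n) (Fin d) ℝ) {B : ℝ} (hB : 0 ≤ B)
    (h : specNorm W ≤ B) (x : Fin d → ℝ) :
    ∑ ℓ, (W.mulVec x ℓ) ^ 2 ≤ B ^ 2 * ∑ a, (x a) ^ 2 := by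
  by_cases hx : ∑ a, (x a) ^ 2 = 0
  · have hx0 : x = 0 := by
      funext a
      have := (Finset.sum_eq_zero_iff_of_nonneg (fun i _ => sq_nonneg (x i))).1 hx a (mem_univ a)
      simpa [pow_eq_zero_iff] using this
    simp [hx0, Matrix.mulVec_zero, hx]
  · have hpos : 0 < ∑ a, (x a) ^ 2 :=
      lt_of_le_of_ne (Finset.sum_nonneg fun i _ => sq_nonneg _) (Ne.symm hx)
    set ν : ℝ := Real.sqrt (∑ a, (x a) ^ 2) with hν
    have hνpos : 0 < ν := Real.sqrt_pos.2 hpos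
    have hν2 : ν ^ 2 = ∑ a, (x a) ^ 2 := Real.sq_sqrt hpos.le
    set u : Fin d → ℝ := fun a => ν⁻¹ * x a with hu
    have husq : ∑ a, (u a) ^ 2 = 1 := by
      simp only [hu, mul_pow, ← Finset.mul_sum]
      rw [← hν2]
      field_simp
    have huunit : euclNorm u = 1 := by
      rw [euclNorm, husq, Real.sqrt_one]
    -- boundedness of the set
    have hbdd : BddAbove {r : ℝ | ∃ y : Fin d → ℝ, euclNorm y = 1 ∧ r = euclNorm (W.mulVec y)} := by
      refine ⟨Real.sqrt (∑ ℓ, ∑ a, (W ℓ a) ^ 2), ?_⟩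
      rintro r ⟨y, hy, rfl⟩
      have hy2 : ∑ a, (y a) ^ 2 = 1 := by
        have := congrArg (fun t => t ^ 2) hy
        simpa [euclNorm, Real.sq_sqrt (Finset.sum_nonneg fun i _ => sq_nonneg (y i))] using this
      rw [euclNorm]
      apply Real.sqrt_le_sqrt
      calc ∑ ℓ, (W.mulVec y ℓ) ^ 2
          ≤ ∑ ℓ, ((∑ a, (W ℓ a) ^ 2) * ∑ a, (y a) ^ 2) := by
            refine Finset.sum_le_sum fun ℓ _ => ?_
            simpa [Matrix.mulVec, dotProduct] using
              Finset.sum_mul_sq_le_sq_mul_sq univ (fun a => W ℓ a) y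
        _ = ∑ ℓ, ∑ a, (W ℓ a) ^ 2 := by simp [hy2]
    have hmem : euclNorm (W.mulVec u) ∈
        {r : ℝ | ∃ y : Fin d → ℝ, euclNorm y = 1 ∧ r = euclNorm (W.mulVec y)} :=
      ⟨u, huunit, rfl⟩
    have hle : euclNorm (W.mulVec u) ≤ B := le_trans (le_csSup hbdd hmem) h
    have hWu : ∑ ℓ, (W.mulVec u ℓ) ^ 2 ≤ B ^ 2 := by
      have h0 : (0:ℝ) ≤ ∑ ℓ, (W.mulVec u ℓ) ^ 2 := Finset.sum_nonneg fun i _ => sq_nonneg _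
      have := pow_le_pow_left₀ (Real.sqrt_nonneg _) hle 2
      rwa [Real.sq_sqrt h0] at this
    have hxu : ∀ ℓ, W.mulVec x ℓ = ν * W.mulVec u ℓ := by
      intro ℓ
      simp only [Matrix.mulVec, dotProduct, hu, Finset.mul_sum]
      refine Finset.sum_congr rfl fun a _ => ?_
      field_simp
    calc ∑ ℓ, (W.mulVec x ℓ) ^ 2 = ν ^ 2 * ∑ ℓ, (W.mulVec u ℓ) ^ 2 := by
          simp only [hxu, mul_pow, ← Finset.mul_sum]
      _ ≤ ν ^ 2 * B ^ 2 := by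
          exact mul_le_mul_of_nonneg_left hWu (sq_nonneg _)
      _ = B ^ 2 * ∑ a, (x a) ^ 2 := by rw [hν2]; ring

lemma specAT {n d : ℕ} (W : Matrix (Fin n) (Fin d) ℝ) {B : ℝ} (hB : 0 ≤ B)
    (h : specNorm W ≤ B) (v : Fin n → ℝ) :
    ∑ a, (∑ ℓ, v ℓ * W ℓ a) ^ 2 ≤ B ^ 2 * ∑ ℓ, (v ℓ) ^ 2 := by
  set t : Fin d → ℝ := fun a => ∑ ℓ, v ℓ * W ℓ a with ht
  set q : ℝ := ∑ a, (t a) ^ 2 with hq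
  have hq0 : 0 ≤ q := Finset.sum_nonneg fun i _ => sq_nonneg _
  have hkey : q = ∑ ℓ, v ℓ * W.mulVec t ℓ := by
    simp only [hq, ht, Matrix.mulVec, dotProduct, pow_two, Finset.sum_mul, Finset.mul_sum]
    rw [Finset.sum_comm]
    refine Finset.sum_congr rfl fun ℓ _ => Finset.sum_congr rfl fun a _ =>
      Finset.sum_congr rfl fun i _ => by ring
  have hcs : q ^ 2 ≤ (∑ ℓ, (v ℓ) ^ 2) * ∑ ℓ, (W.mulVec t ℓ) ^ 2 := by
    rw [hkey]; exact Finset.sum_mul_sq_le_sq_mul_sq univ v _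
  have h2 : q ^ 2 ≤ (∑ ℓ, (v ℓ) ^ 2) * (B ^ 2 * q) :=
    le_trans hcs (mul_le_mul_of_nonneg_left (specA W hB h t)
      (Finset.sum_nonneg fun i _ => sq_nonneg _))
  rcases eq_or_lt_of_le hq0 with hq' | hq'
  · rw [← hq']; positivity
  · have := le_of_mul_le_mul_right (by nlinarith : q * q ≤ (B ^ 2 * ∑ ℓ, (v ℓ) ^ 2) * q) hq'
    linarith

lemma rep (k : ℕ) (hk : 1 ≤ k) (dims : ℕ → ℕ) (B : ℝ) (hB : 0 < B) (j : ℕ) :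
    ∃ (ι : Type) (_ : Fintype ι) (φ : (Fin (dims 0) → ℝ) → ι → ℝ),
      (∀ x : Fin (dims 0) → ℝ, ∑ s, (φ x s) ^ 2 ≤ (∑ a, (x a) ^ 2) ^ (k ^ j)) ∧
      ∀ (W : ∀ j' : ℕ, Matrix (Fin (dims (j' + 1))) (Fin (dims j')) ℝ),
        (∀ j' < j, specNorm (W j') ≤ B) →
        ∃ C : Fin (dims j) → ι → ℝ,
          (∀ x ℓ, fwd k dims W j x ℓ = ∑ s, C ℓ s * φ x s) ∧
          (∀ u : Fin (dims j) → ℝ,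
            ∑ s, (∑ ℓ, u ℓ * C ℓ s) ^ 2
              ≤ (B ^ (∑ t ∈ Finset.range j, k ^ (t + 1))) ^ 2 * ∑ ℓ, (u ℓ) ^ 2) := by
  induction j with
  | zero =>
    refine ⟨Fin (dims 0), inferInstance, fun x s => x s, ?_, ?_⟩
    · intro x; simp
    · intro W _
      refine ⟨fun ℓ s => if ℓ = s then 1 else 0, ?_, ?_⟩
      · intro x ℓ
        show x ℓ = _
        simp [ite_mul]
      · intro u
        have : ∀ s, (∑ ℓ, u ℓ * if ℓ = s then (1:ℝ) else 0) = u s := by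
          intro s; simp [mul_ite]
        simp only [this]
        simp
  | succ j ih =>
    obtain ⟨ι, iι, φ, hφ, hre⟩ := ih
    refine ⟨Fin k → ι, Pi.instFintype, fun x σ => ∏ t, φ x (σ t), ?_, ?_⟩
    · intro x
      have h1 : ∑ σ : Fin k → ι, (∏ t, φ x (σ t)) ^ 2 = ∏ _t : Fin k, ∑ s : ι, (φ x s) ^ 2 := by
        rw [← sum_prod_pi k (fun _ s => (φ x s) ^ 2)]
        exact Finset.sum_congr rfl fun σ _ => by rw [← Finset.prod_pow]
      rw [h1]
      calc ∏ _t : Fin k, ∑ s : ι, (φ x s) ^ 2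
          ≤ ∏ _t : Fin k, (∑ a, (x a) ^ 2) ^ (k ^ j) :=
            Finset.prod_le_prod (fun t _ => Finset.sum_nonneg fun s _ => sq_nonneg _)
              (fun t _ => hφ x)
        _ = ((∑ a, (x a) ^ 2) ^ (k ^ j)) ^ k := by
            rw [Finset.prod_const, card_univ, Fintype.card_fin]
        _ = (∑ a, (x a) ^ 2) ^ (k ^ (j + 1)) := by rw [← pow_mul, ← pow_succ]
    · intro W hW
      obtain ⟨C, hrepr, hdual⟩ := hre W (fun j' hj' => hW j' (Nat.lt_succ_of_lt hj'))
      have hWj : specNorm (W j) ≤ B := hW j (Nat.lt_succ_self j)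
      set M : Fin (dims (j + 1)) → ι → ℝ := fun ℓ s => ∑ a, W j ℓ a * C a s with hM
      set nj : ℝ := B ^ (∑ t ∈ Finset.range j, k ^ (t + 1)) with hnj
      have hnj0 : 0 ≤ nj := by positivity
      refine ⟨fun ℓ σ => ∏ t, M ℓ (σ t), ?_, ?_⟩
      · intro x ℓ
        have hmv : (W j).mulVec (fwd k dims W j x) ℓ = ∑ s : ι, M ℓ s * φ x s := by
          simp only [Matrix.mulVec, dotProduct]
          rw [Finset.sum_congr rfl fun a (_ : a ∈ univ) => by
            rw [hrepr x a, Finset.mul_sum]]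
          rw [Finset.sum_comm]
          refine Finset.sum_congr rfl fun s _ => ?_
          rw [hM]
          simp only []
          rw [Finset.sum_mul]
          exact Finset.sum_congr rfl fun a _ => by ring
        show (W j).mulVec (fwd k dims W j x) ℓ ^ k = _
        rw [hmv]
        have hpk : (∑ s : ι, M ℓ s * φ x s) ^ k = ∏ _t : Fin k, ∑ s : ι, M ℓ s * φ x s := by
          rw [Finset.prod_const, card_univ, Fintype.card_fin]
        rw [hpk, ← sum_prod_pi k (fun _ s => M ℓ s * φ x s)]
        exact Finset.sum_congr rfl fun σ _ => Finset.prod_mul_distrib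
      · intro u
        have hk0 : 0 < k := hk
        set i0 : Fin k := ⟨0, hk0⟩ with hi0
        set du : (Fin k → Fin (dims (j + 1))) → ℝ :=
          fun h => if ∀ t, h t = h i0 then u (h i0) else 0 with hdu
        have hAop : ∀ w : Fin (dims (j + 1)) → ℝ,
            ∑ s : ι, (∑ ℓ, M ℓ s * w ℓ) ^ 2 ≤ ((B * nj) ^ 2) * ∑ ℓ, (w ℓ) ^ 2 := by
          intro w
          have hrw : ∀ s : ι, (∑ ℓ, M ℓ s * w ℓ)
              = ∑ a, (∑ ℓ, w ℓ * W j ℓ a) * C a s := by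
            intro s
            calc ∑ ℓ, M ℓ s * w ℓ
                = ∑ ℓ, ∑ a, (w ℓ * W j ℓ a) * C a s := by
                  refine Finset.sum_congr rfl fun ℓ _ => ?_
                  rw [hM]
                  simp only []
                  rw [Finset.sum_mul]
                  exact Finset.sum_congr rfl fun a _ => by ring
              _ = ∑ a, ∑ ℓ, (w ℓ * W j ℓ a) * C a s := Finset.sum_comm
              _ = ∑ a, (∑ ℓ, w ℓ * W j ℓ a) * C a s := by
                  exact Finset.sum_congr rfl fun a _ => (Finset.sum_mul _ _ _).symm
          calc ∑ s : ι, (∑ ℓ, M ℓ s * w ℓ) ^ 2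
              = ∑ s : ι, (∑ a, (∑ ℓ, w ℓ * W j ℓ a) * C a s) ^ 2 := by
                exact Finset.sum_congr rfl fun s _ => by rw [hrw]
            _ ≤ nj ^ 2 * ∑ a, (∑ ℓ, w ℓ * W j ℓ a) ^ 2 := hdual _
            _ ≤ nj ^ 2 * (B ^ 2 * ∑ ℓ, (w ℓ) ^ 2) := by
                exact mul_le_mul_of_nonneg_left (specAT (W j) hB.le hWj w) (sq_nonneg _)
            _ = ((B * nj) ^ 2) * ∑ ℓ, (w ℓ) ^ 2 := by ring
        have hTP := tensor_pow_bound (fun s ℓ => M ℓ s) ((B * nj) ^ 2) (sq_nonneg _) hAop k du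
        have hinner : ∀ σ : Fin k → ι,
            (∑ h : Fin k → Fin (dims (j + 1)), (∏ t, M (h t) (σ t)) * du h)
              = ∑ ℓ, u ℓ * ∏ t, M ℓ (σ t) := by
          intro σ
          have hpt : ∀ h : Fin k → Fin (dims (j + 1)),
              (∏ t, M (h t) (σ t)) * du h
                = if ∀ t, h t = h i0 then u (h i0) * ∏ t, M ((fun _ => h i0) t) (σ t) else 0 := by
            intro h
            rw [hdu]
            simp only []
            by_cases hcon : ∀ t, h t = h i0
            · rw [if_pos hcon, if_pos hcon]
              have : (∏ t, M (h t) (σ t)) = ∏ t, M (h i0) (σ t) :=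
                Finset.prod_congr rfl fun t _ => by rw [hcon t]
              rw [this]; ring
            · rw [if_neg hcon, if_neg hcon, mul_zero]
          rw [Finset.sum_congr rfl fun h _ => hpt h]
          exact diag_sum hk0 (fun ℓ h => u ℓ * ∏ t, M ℓ (σ t))
        have hdusq : ∑ h : Fin k → Fin (dims (j + 1)), (du h) ^ 2 = ∑ ℓ, (u ℓ) ^ 2 := by
          have hpt : ∀ h : Fin k → Fin (dims (j + 1)),
              (du h) ^ 2 = if ∀ t, h t = h i0 then (u (h i0)) ^ 2 else 0 := by
            intro h
            rw [hdu]
            simp only []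
            by_cases hcon : ∀ t, h t = h i0
            · rw [if_pos hcon, if_pos hcon]
            · rw [if_neg hcon, if_neg hcon]; ring
          rw [Finset.sum_congr rfl fun h _ => hpt h]
          exact diag_sum hk0 (fun ℓ _ => (u ℓ) ^ 2)
        have hmain : ∑ σ : Fin k → ι, (∑ ℓ, u ℓ * ∏ t, M ℓ (σ t)) ^ 2
            ≤ (((B * nj) ^ 2) ^ k) * ∑ ℓ, (u ℓ) ^ 2 := by
          rw [← hdusq]
          calc ∑ σ : Fin k → ι, (∑ ℓ, u ℓ * ∏ t, M ℓ (σ t)) ^ 2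
              = ∑ σ : Fin k → ι,
                  (∑ h : Fin k → Fin (dims (j + 1)), (∏ t, M (h t) (σ t)) * du h) ^ 2 := by
                exact Finset.sum_congr rfl fun σ _ => by rw [hinner σ]
            _ ≤ _ := hTP
        have hconst : (((B * nj) ^ 2) ^ k)
            = (B ^ (∑ t ∈ Finset.range (j + 1), k ^ (t + 1))) ^ 2 := by
          have hS : (∑ t ∈ Finset.range (j + 1), k ^ (t + 1))
              = ((∑ t ∈ Finset.range j, k ^ (t + 1)) + 1) * k := by
            rw [Finset.sum_range_succ', add_mul, one_mul, Finset.sum_mul]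
            simp [pow_succ]
          rw [hnj, hS, ← pow_succ', ← pow_mul, ← pow_mul, ← pow_mul]
          congr 1
          ring
        rw [hconst] at hmain
        exact hmain

/-- Rademacher complexity bound for depth-`(L+1)` networks with power activation
`z ↦ z^k`, spectral norm bounds `‖W^j‖ ≤ B` and `‖u‖ ≤ b`, on points of norm `≤ b_x`:
at most `b · B^{k+k²+⋯+k^L} · b_x^{k^L} / √m`. -/
theorem stmt13 (k L : ℕ) (hk : 1 ≤ k) (hL : 1 ≤ L) (b B bx : ℝ)
    (hb : 0 < b) (hB : 0 < B) (hbx : 0 < bx) (dims : ℕ → ℕ) (m : ℕ) (hm : 1 ≤ m)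
    (x : Fin m → Fin (dims 0) → ℝ) (hx : ∀ i, euclNorm (x i) ≤ bx) :
    rademacherExp m (fun ε =>
        ⨆ p : {p : (∀ j : ℕ, Matrix (Fin (dims (j + 1))) (Fin (dims j)) ℝ) ×
                    (Fin (dims L) → ℝ) //
                (∀ j, j < L → specNorm (p.1 j) ≤ B) ∧ euclNorm p.2 ≤ b},
          (1 / (m : ℝ)) * ∑ i, ε i * ∑ l, p.1.2 l * fwd k dims p.1.1 L (x i) l)
      ≤ b * B ^ (∑ t ∈ Finset.range L, k ^ (t + 1)) * bx ^ (k ^ L) / Real.sqrt m := by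

  classical
  obtain ⟨ι, iι, φ, hφ, hrep⟩ := rep k hk dims B hB L
  set S : ℕ := ∑ t ∈ Finset.range L, k ^ (t + 1) with hS
  set nL : ℝ := B ^ S with hnL
  have hnL0 : 0 < nL := by positivity
  have hm0 : (0:ℝ) < m := by exact_mod_cast hm
  set E : ℕ := k ^ L with hE
  -- nonempty index
  haveI hne : Nonempty {p : (∀ j : ℕ, Matrix (Fin (dims (j + 1))) (Fin (dims j)) ℝ) ×
      (Fin (dims L) → ℝ) //
      (∀ j, j < L → specNorm (p.1 j) ≤ B) ∧ euclNorm p.2 ≤ b} := by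
    refine ⟨⟨(fun _ => 0, fun _ => 0), ⟨fun j _ => ?_, ?_⟩⟩⟩
    · refine Real.sSup_le ?_ hB.le
      rintro r ⟨y, hy, rfl⟩
      have : (0 : Matrix (Fin (dims (j+1))) (Fin (dims j)) ℝ).mulVec y = 0 :=
        Matrix.zero_mulVec y
      rw [this]
      simp [euclNorm]
      positivity
    · simp [euclNorm]
      positivity
  set Φ : (Fin m → Bool) → ι → ℝ :=
    fun εb s => ∑ i, (if εb i then (1:ℝ) else -1) * φ (x i) s with hΦ
  set Q : (Fin m → Bool) → ℝ := fun εb => ∑ s, (Φ εb s) ^ 2 with hQ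
  have hQ0 : ∀ εb, 0 ≤ Q εb := fun εb => Finset.sum_nonneg fun s _ => sq_nonneg _
  -- Claim 1 : pointwise bound on the supremum
  have claim1 : ∀ εb : Fin m → Bool,
      (⨆ p : {p : (∀ j : ℕ, Matrix (Fin (dims (j + 1))) (Fin (dims j)) ℝ) ×
                    (Fin (dims L) → ℝ) //
                (∀ j, j < L → specNorm (p.1 j) ≤ B) ∧ euclNorm p.2 ≤ b},
          (1 / (m : ℝ)) * ∑ i, (if εb i then (1:ℝ) else -1) *
            ∑ l, p.1.2 l * fwd k dims p.1.1 L (x i) l)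
        ≤ (nL * b / m) * Real.sqrt (Q εb) := by
    intro εb
    apply ciSup_le
    rintro ⟨⟨Wp, u⟩, hWb, hub⟩
    obtain ⟨C, hrepr, hdual⟩ := hrep Wp hWb
    set v : ι → ℝ := fun s => ∑ l, u l * C l s with hv
    have hval : ∑ i, (if εb i then (1:ℝ) else -1) *
        ∑ l, u l * fwd k dims Wp L (x i) l = ∑ s, v s * Φ εb s := by
      have h1 : ∀ i, (∑ l, u l * fwd k dims Wp L (x i) l) = ∑ s, v s * φ (x i) s := by
        intro i
        calc ∑ l, u l * fwd k dims Wp L (x i) l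
            = ∑ l, ∑ s, u l * C l s * φ (x i) s := by
              refine Finset.sum_congr rfl fun l _ => ?_
              rw [hrepr (x i) l, Finset.mul_sum]
              exact Finset.sum_congr rfl fun s _ => by ring
          _ = ∑ s, ∑ l, u l * C l s * φ (x i) s := Finset.sum_comm
          _ = ∑ s, v s * φ (x i) s := by
              refine Finset.sum_congr rfl fun s _ => ?_
              rw [hv]
              simp only []
              rw [Finset.sum_mul]
      calc ∑ i, (if εb i then (1:ℝ) else -1) * ∑ l, u l * fwd k dims Wp L (x i) l
          = ∑ i, ∑ s, v s * ((if εb i then (1:ℝ) else -1) * φ (x i) s) := by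
            refine Finset.sum_congr rfl fun i _ => ?_
            rw [h1 i, Finset.mul_sum]
            exact Finset.sum_congr rfl fun s _ => by ring
        _ = ∑ s, ∑ i, v s * ((if εb i then (1:ℝ) else -1) * φ (x i) s) := Finset.sum_comm
        _ = ∑ s, v s * Φ εb s := by
            refine Finset.sum_congr rfl fun s _ => ?_
            rw [hΦ]
            simp only []
            rw [Finset.mul_sum]
    have hvnorm : ∑ s, (v s) ^ 2 ≤ (nL * b) ^ 2 := by
      have h1 := hdual u
      have hub2 : ∑ l, (u l) ^ 2 ≤ b ^ 2 := by
        have h0 : (0:ℝ) ≤ ∑ l, (u l) ^ 2 := Finset.sum_nonneg fun l _ => sq_nonneg _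
        have := pow_le_pow_left₀ (Real.sqrt_nonneg _) hub 2
        rwa [Real.sq_sqrt h0] at this
      calc ∑ s, (v s) ^ 2 ≤ nL ^ 2 * ∑ l, (u l) ^ 2 := h1
        _ ≤ nL ^ 2 * b ^ 2 := mul_le_mul_of_nonneg_left hub2 (sq_nonneg _)
        _ = (nL * b) ^ 2 := by ring
    have hcs : ∑ s, v s * Φ εb s ≤ (nL * b) * Real.sqrt (Q εb) := by
      have h2 : (∑ s, v s * Φ εb s) ^ 2 ≤ (∑ s, (v s) ^ 2) * ∑ s, (Φ εb s) ^ 2 :=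
        Finset.sum_mul_sq_le_sq_mul_sq univ v (Φ εb)
      calc ∑ s, v s * Φ εb s ≤ |∑ s, v s * Φ εb s| := le_abs_self _
        _ = Real.sqrt ((∑ s, v s * Φ εb s) ^ 2) := (Real.sqrt_sq_eq_abs _).symm
        _ ≤ Real.sqrt ((nL * b) ^ 2 * Q εb) := by
            apply Real.sqrt_le_sqrt
            refine le_trans h2 ?_
            rw [hQ]
            exact mul_le_mul_of_nonneg_right hvnorm (Finset.sum_nonneg fun s _ => sq_nonneg _)
        _ = (nL * b) * Real.sqrt (Q εb) := by
            rw [Real.sqrt_mul (sq_nonneg _), Real.sqrt_sq (by positivity)]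
    calc (1 / (m : ℝ)) * ∑ i, (if εb i then (1:ℝ) else -1) *
          ∑ l, u l * fwd k dims Wp L (x i) l
        = (1 / (m : ℝ)) * ∑ s, v s * Φ εb s := by rw [hval]
      _ ≤ (1 / (m : ℝ)) * ((nL * b) * Real.sqrt (Q εb)) := by
          exact mul_le_mul_of_nonneg_left hcs (by positivity)
      _ = (nL * b / m) * Real.sqrt (Q εb) := by ring
  -- Claim 4 : second moment
  have claim4 : ∑ εb : Fin m → Bool, Q εb ≤ 2 ^ m * (m * (bx ^ E) ^ 2) := by
    have hSwap : ∑ εb : Fin m → Bool, Q εb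
        = ∑ s, ∑ εb : Fin m → Bool, (Φ εb s) ^ 2 := Finset.sum_comm
    have hinner : ∀ s : ι, ∑ εb : Fin m → Bool, (Φ εb s) ^ 2
        = 2 ^ m * ∑ i, (φ (x i) s) ^ 2 := by
      intro s
      have hexp : ∀ εb : Fin m → Bool, (Φ εb s) ^ 2
          = ∑ i, ∑ i', ((if εb i then (1:ℝ) else -1) * (if εb i' then (1:ℝ) else -1)) *
              (φ (x i) s * φ (x i') s) := by
        intro εb
        rw [hΦ]
        simp only []
        rw [pow_two, Finset.sum_mul_sum]
        exact Finset.sum_congr rfl fun i _ => Finset.sum_congr rfl fun i' _ => by ring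
      calc ∑ εb : Fin m → Bool, (Φ εb s) ^ 2
          = ∑ εb : Fin m → Bool, ∑ i, ∑ i',
              ((if εb i then (1:ℝ) else -1) * (if εb i' then (1:ℝ) else -1)) *
              (φ (x i) s * φ (x i') s) := Finset.sum_congr rfl fun εb _ => hexp εb
        _ = ∑ i, ∑ i', (∑ εb : Fin m → Bool,
              ((if εb i then (1:ℝ) else -1) * (if εb i' then (1:ℝ) else -1))) *
              (φ (x i) s * φ (x i') s) := by
            rw [Finset.sum_comm]
            refine Finset.sum_congr rfl fun i _ => ?_
            rw [Finset.sum_comm]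
            refine Finset.sum_congr rfl fun i' _ => ?_
            rw [Finset.sum_mul]
        _ = ∑ i, ∑ i', (if i = i' then (2:ℝ) ^ m else 0) * (φ (x i) s * φ (x i') s) := by
            exact Finset.sum_congr rfl fun i _ => Finset.sum_congr rfl fun i' _ => by
              rw [sgn_orth i i']
        _ = 2 ^ m * ∑ i, (φ (x i) s) ^ 2 := by
            rw [Finset.mul_sum]
            refine Finset.sum_congr rfl fun i _ => ?_
            rw [Finset.sum_eq_single i]
            · simp [pow_two]
            · intro i' _ hne'; rw [if_neg fun h => hne' h.symm, zero_mul]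
            · intro habs; exact absurd (mem_univ _) habs
    have hxsq : ∀ i, ∑ a, (x i a) ^ 2 ≤ bx ^ 2 := by
      intro i
      have h0 : (0:ℝ) ≤ ∑ a, (x i a) ^ 2 := Finset.sum_nonneg fun a _ => sq_nonneg _
      have := pow_le_pow_left₀ (Real.sqrt_nonneg _) (hx i) 2
      rwa [Real.sq_sqrt h0] at this
    calc ∑ εb : Fin m → Bool, Q εb = ∑ s, ∑ εb : Fin m → Bool, (Φ εb s) ^ 2 := hSwap
      _ = 2 ^ m * ∑ i, ∑ s, (φ (x i) s) ^ 2 := by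
          rw [Finset.sum_congr rfl fun s _ => hinner s, ← Finset.mul_sum, Finset.sum_comm]
      _ ≤ 2 ^ m * ∑ i, (bx ^ E) ^ 2 := by
          refine mul_le_mul_of_nonneg_left (Finset.sum_le_sum fun i _ => ?_) (by positivity)
          calc ∑ s, (φ (x i) s) ^ 2 ≤ (∑ a, (x i a) ^ 2) ^ (k ^ L) := hφ (x i)
            _ ≤ (bx ^ 2) ^ (k ^ L) := by
                exact pow_le_pow_left₀ (Finset.sum_nonneg fun a _ => sq_nonneg _) (hxsq i) _
            _ = (bx ^ E) ^ 2 := by rw [hE, ← pow_mul, ← pow_mul, Nat.mul_comm]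
      _ = 2 ^ m * (m * (bx ^ E) ^ 2) := by rw [Finset.sum_const, card_univ]; simp [mul_comm]
  -- Claim 3 : Cauchy-Schwarz over the expectation
  have claim3 : ∑ εb : Fin m → Bool, Real.sqrt (Q εb)
      ≤ Real.sqrt ((2:ℝ) ^ m * ∑ εb : Fin m → Bool, Q εb) := by
    have h2 : (∑ εb : Fin m → Bool, 1 * Real.sqrt (Q εb)) ^ 2
        ≤ (∑ εb : Fin m → Bool, (1:ℝ) ^ 2) * ∑ εb : Fin m → Bool, (Real.sqrt (Q εb)) ^ 2 :=
      Finset.sum_mul_sq_le_sq_mul_sq univ _ _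
    have hcard : (∑ εb : Fin m → Bool, (1:ℝ) ^ 2) = 2 ^ m := by
      simp [Finset.sum_const, card_univ]
    have hsq : (∑ εb : Fin m → Bool, (Real.sqrt (Q εb)) ^ 2) = ∑ εb : Fin m → Bool, Q εb :=
      Finset.sum_congr rfl fun εb _ => Real.sq_sqrt (hQ0 εb)
    have h0 : 0 ≤ ∑ εb : Fin m → Bool, Real.sqrt (Q εb) :=
      Finset.sum_nonneg fun εb _ => Real.sqrt_nonneg _
    calc ∑ εb : Fin m → Bool, Real.sqrt (Q εb)
        = Real.sqrt ((∑ εb : Fin m → Bool, Real.sqrt (Q εb)) ^ 2) := (Real.sqrt_sq h0).symm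
      _ ≤ Real.sqrt ((2:ℝ) ^ m * ∑ εb : Fin m → Bool, Q εb) := by
          apply Real.sqrt_le_sqrt
          simpa [hcard, hsq] using h2
  -- Put everything together
  have hfinal : rademacherExp m (fun ε =>
      ⨆ p : {p : (∀ j : ℕ, Matrix (Fin (dims (j + 1))) (Fin (dims j)) ℝ) ×
                    (Fin (dims L) → ℝ) //
                (∀ j, j < L → specNorm (p.1 j) ≤ B) ∧ euclNorm p.2 ≤ b},
          (1 / (m : ℝ)) * ∑ i, ε i * ∑ l, p.1.2 l * fwd k dims p.1.1 L (x i) l)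
      ≤ ((nL * b / m) * ∑ εb : Fin m → Bool, Real.sqrt (Q εb)) / 2 ^ m := by
    rw [rademacherExp]
    apply div_le_div_of_nonneg_right ?_ (by positivity)
    refine le_trans (Finset.sum_le_sum fun εb _ => claim1 εb) ?_
    rw [← Finset.mul_sum]
  have hsqrtfin : Real.sqrt ((2:ℝ) ^ m * ((2:ℝ) ^ m * (m * (bx ^ E) ^ 2)))
      = (2:ℝ) ^ m * Real.sqrt m * bx ^ E := by
    have hrad : (2:ℝ) ^ m * ((2:ℝ) ^ m * (m * (bx ^ E) ^ 2))
        = ((2:ℝ) ^ m * Real.sqrt m * bx ^ E) ^ 2 := by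
      have hms : Real.sqrt m ^ 2 = m := Real.sq_sqrt hm0.le
      rw [mul_pow, mul_pow, hms]
      ring
    rw [hrad, Real.sqrt_sq (by positivity)]
  have hsm : Real.sqrt m > 0 := Real.sqrt_pos.2 hm0
  have hchain : ((nL * b / m) * ∑ εb : Fin m → Bool, Real.sqrt (Q εb)) / 2 ^ m
      ≤ b * nL * bx ^ E / Real.sqrt m := by
    have hstep : ((nL * b / m) * ∑ εb : Fin m → Bool, Real.sqrt (Q εb)) / 2 ^ m
        ≤ ((nL * b / m) * ((2:ℝ) ^ m * Real.sqrt m * bx ^ E)) / 2 ^ m := by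
      apply div_le_div_of_nonneg_right ?_ (by positivity)
      refine mul_le_mul_of_nonneg_left ?_ (by positivity)
      refine le_trans claim3 ?_
      rw [← hsqrtfin]
      apply Real.sqrt_le_sqrt
      exact mul_le_mul_of_nonneg_left claim4 (by positivity)
    refine le_trans hstep (le_of_eq ?_)
    set r := Real.sqrt (m:ℝ) with hr
    have hs : r * r = (m:ℝ) := Real.mul_self_sqrt hm0.le
    field_simp
    rw [← hs]
    ring
  exact le_trans hfinal hchain
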